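/- Let q = p^f with f even, f > 2. The number of GL₂(𝔽_p)-orbits on ℙ¹(𝔽_q) \ ℙ¹(𝔽_{p²}) is p(p^{f−2} − 1)/(p² − 1), and every such orbit has cardinality p(p² − 1). -/

import Mathlib

open Matrix Projectivization

/-- The natural action of `GL₂` over a field on the projective line over that field. -/
noncomputable instance glProjAct {K : Type*} [Field K] :
    MulAction (GL (Fin 2) K) (Projectivization K (Fin 2 → K)) where
  smul g x := x.map (Matrix.mulVecLin (g : Matrix (Fin 2) (Fin 2) K))
      (fun v w h => (Matrix.GeneralLinearGroup.toLin g).toLinearEquiv.injective (by simpa using h))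
  one_smul x := by
    induction x using Projectivization.ind with
    | h v hv =>
      show Projectivization.map _ _ _ = _
      erw [Projectivization.map_mk]
      simp [Matrix.mulVecLin_apply]
  mul_smul g h x := by
    induction x using Projectivization.ind with
    | h v hv =>
      show Projectivization.map _ _ _ = Projectivization.map _ _ (Projectivization.map _ _ _)
      erw [Projectivization.map_mk, Projectivization.map_mk]
      simp [Matrix.mulVecLin_apply, Matrix.mulVec_mulVec]

/-- The action of `GL₂(F)` on the projective line over an extension `L` of `F`,
via matrix multiplication on homogeneous coordinates (entries of the matrix being
mapped into `L` by the algebra map). -/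
noncomputable instance glProjActOf {F L : Type*} [Field F] [Field L] [Algebra F L] :
    MulAction (GL (Fin 2) F) (Projectivization L (Fin 2 → L)) :=
  MulAction.compHom _ (Matrix.GeneralLinearGroup.map (n := Fin 2) (algebraMap F L))

lemma mulVec_ne_zero {K : Type*} [Field K] (g : GL (Fin 2) K) (v : Fin 2 → K) (hv : v ≠ 0) :
    (g : Matrix (Fin 2) (Fin 2) K).mulVec v ≠ 0 := by
  intro h
  exact hv ((Matrix.GeneralLinearGroup.toLin g).toLinearEquiv.map_eq_zero_iff.1 (by simpa using h))

lemma smul_mk' {K : Type*} [Field K] (g : GL (Fin 2) K) (v : Fin 2 → K) (hv : v ≠ 0) :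
    g • Projectivization.mk K v hv =
      Projectivization.mk K ((g : Matrix (Fin 2) (Fin 2) K).mulVec v) (mulVec_ne_zero g v hv) :=
  rfl

lemma smulOf_mk {F L : Type*} [Field F] [Field L] [Algebra F L]
    (g : GL (Fin 2) F) (v : Fin 2 → L) (hv : v ≠ 0) :
    g • Projectivization.mk L v hv =
      Projectivization.mk L (((g : Matrix (Fin 2) (Fin 2) F).map (algebraMap F L)).mulVec v)
        (fun h => mulVec_ne_zero (Matrix.GeneralLinearGroup.map (algebraMap F L) g) v hv h) :=
  rfl

lemma mulVec_pair {L : Type*} [Field L] (M : Matrix (Fin 2) (Fin 2) L) (a b : L) :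
    M.mulVec ![a, b] = ![M 0 0 * a + M 0 1 * b, M 1 0 * a + M 1 1 * b] := by
  funext i; fin_cases i <;> simp [Matrix.mulVec, dotProduct, Fin.sum_univ_two]

lemma vne {L : Type*} [Field L] (x : L) : (![x, 1] : Fin 2 → L) ≠ 0 := by
  intro h; simpa using congrFun h 1


section Quad
variable {p : ℕ} [Fact p.Prime] {L : Type*} [Field L] [CharP L p]

lemma pow_p_sq {x : L} (h : x ^ p = x) : x ^ p ^ 2 = x := by
  rw [pow_two, pow_mul, h, h]

lemma quad_lemma {x : L} (hx : x ^ p ^ 2 ≠ x) {c e b : L}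
    (hc : c ^ p = c) (he : e ^ p = e) (hb : b ^ p = b)
    (h : c * x ^ 2 + e * x + b = 0) : c = 0 ∧ e = 0 ∧ b = 0 := by
  have hxp : x ^ p ≠ x := fun h' => hx (pow_p_sq h')
  have h2 : c ^ p * (x ^ p) ^ 2 + e ^ p * x ^ p + b ^ p = 0 := by
    have := congrArg (frobenius L p) h
    simpa only [map_add, _root_.map_mul, map_pow, frobenius_def, map_zero, mul_pow] using this
  rw [hc, he, hb] at h2
  have key : (x ^ p - x) * (c * (x ^ p + x) + e) = 0 := by linear_combination h2 - h
  have hne : x ^ p - x ≠ 0 := sub_ne_zero.2 hxp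
  have hce : c * (x ^ p + x) + e = 0 := by
    rcases mul_eq_zero.1 key with h' | h'
    · exact absurd h' hne
    · exact h'
  have hc0 : c = 0 := by
    by_contra hcne
    have ht : x ^ p + x = -e / c := by
      rw [eq_div_iff hcne]
      linear_combination hce
    have htp : (-e / c) ^ p = -e / c := by
      have : (-e / c) ^ p = frobenius L p (-e / c) := rfl
      rw [this, map_div₀, map_neg, frobenius_def, frobenius_def, hc, he]
    have e1 : (x ^ p + x) ^ p = x ^ p ^ 2 + x ^ p := by
      rw [add_pow_char, ← pow_mul, ← pow_two]
    have e2 : (x ^ p + x) ^ p = x ^ p + x := by rw [ht, htp, ← ht]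
    apply hx
    have := e1.symm.trans e2
    linear_combination this
  subst hc0
  have he0 : e = 0 := by simpa using hce
  subst he0
  refine ⟨rfl, rfl, ?_⟩
  linear_combination h
end Quad

noncomputable def scalarGL (p : ℕ) [Fact p.Prime] : (ZMod p)ˣ →* GL (Fin 2) (ZMod p) :=
  Units.map (Matrix.scalar (Fin 2)).toMonoidHom

lemma scalarGL_injective (p : ℕ) [Fact p.Prime] : Function.Injective (scalarGL p) := by
  intro u v h
  ext
  have := congrArg (fun g : GL (Fin 2) (ZMod p) => (g : Matrix (Fin 2) (Fin 2) (ZMod p)) 0 0) h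
  simpa [scalarGL, Matrix.scalar_apply] using this

section Stab
variable {p : ℕ} [Fact p.Prime] {L : Type*} [Field L] [Algebra (ZMod p) L] [CharP L p]

lemma algMap_pow_p (z : ZMod p) : (algebraMap (ZMod p) L z) ^ p = algebraMap (ZMod p) L z := by
  rw [← map_pow, ZMod.pow_card]

lemma smul_eq_iff_scalar {x : L} (hx : x ^ p ^ 2 ≠ x) (g : GL (Fin 2) (ZMod p)) :
    g • Projectivization.mk L ![x, 1] (vne x) = Projectivization.mk L ![x, 1] (vne x) ↔
      ∃ u : (ZMod p)ˣ, g = scalarGL p u := by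
  have hp : p.Prime := Fact.out
  set ag := (g : Matrix (Fin 2) (Fin 2) (ZMod p)) 0 0 with hag
  set bg := (g : Matrix (Fin 2) (Fin 2) (ZMod p)) 0 1 with hbg
  set cg := (g : Matrix (Fin 2) (Fin 2) (ZMod p)) 1 0 with hcg
  set dg := (g : Matrix (Fin 2) (Fin 2) (ZMod p)) 1 1 with hdg
  constructor
  · intro hg
    rw [smulOf_mk, Projectivization.mk_eq_mk_iff, mulVec_pair] at hg
    obtain ⟨t, ht⟩ := hg
    have h0 := congrFun ht 0
    have h1 := congrFun ht 1
    simp only [Pi.smul_apply, Matrix.cons_val_zero, Matrix.cons_val_one, Matrix.head_cons,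
      Units.smul_def, smul_eq_mul, mul_one, Matrix.map_apply] at h0 h1
    have hquad : (algebraMap (ZMod p) L) cg * x ^ 2 +
        ((algebraMap (ZMod p) L) dg - (algebraMap (ZMod p) L) ag) * x +
        (-((algebraMap (ZMod p) L) bg)) = 0 := by
      linear_combination h0 - x * h1
    obtain ⟨hC, hE, hB⟩ := quad_lemma hx (algMap_pow_p cg)
      (by rw [← map_sub]; exact algMap_pow_p _) (by rw [← map_neg]; exact algMap_pow_p _) hquad
    have inj := (algebraMap (ZMod p) L).injective
    have hc0 : cg = 0 := inj (by simpa using hC)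
    have hda : dg = ag := inj (by rw [sub_eq_zero] at hE; simpa using hE)
    have hb0 : bg = 0 := inj (by simpa using neg_eq_zero.1 hB)
    have hdet : IsUnit ((g : Matrix (Fin 2) (Fin 2) (ZMod p)).det) :=
      (Matrix.isUnit_iff_isUnit_det _).1 g.isUnit
    rw [Matrix.det_fin_two, ← hag, ← hbg, ← hcg, ← hdg, hb0, hc0, hda] at hdet
    have hane : ag ≠ 0 := by
      intro h0'
      rw [h0'] at hdet
      simp at hdet
    refine ⟨Units.mk0 ag hane, ?_⟩
    apply Units.ext
    have heta : (g : Matrix (Fin 2) (Fin 2) (ZMod p)) = !![ag, bg; cg, dg] :=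
      Matrix.etaExpand_eq (g : Matrix (Fin 2) (Fin 2) (ZMod p)) ▸ rfl
    show (g : Matrix (Fin 2) (Fin 2) (ZMod p)) = _
    rw [Matrix.eta_fin_two (g : Matrix (Fin 2) (Fin 2) (ZMod p)), ← hag, ← hbg, ← hcg, ← hdg,
      hb0, hc0, hda]
    ext i j
    fin_cases i <;> fin_cases j <;>
      simp [scalarGL, Matrix.scalar_apply, Matrix.diagonal, Units.mk0]
  · rintro ⟨u, rfl⟩
    rw [smulOf_mk, Projectivization.mk_eq_mk_iff, mulVec_pair]
    refine ⟨Units.map (algebraMap (ZMod p) L).toMonoidHom u, ?_⟩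
    funext i
    fin_cases i <;>
      simp [scalarGL, Matrix.scalar_apply, Matrix.diagonal, Matrix.map_apply, Units.smul_def]

end Stab

section Stab2
variable {p : ℕ} [Fact p.Prime] {L : Type*} [Field L] [Algebra (ZMod p) L] [CharP L p]

lemma stab_card {x : L} (hx : x ^ p ^ 2 ≠ x) :
    Nat.card (MulAction.stabilizer (GL (Fin 2) (ZMod p))
      (Projectivization.mk L ![x, 1] (vne x))) = p - 1 := by
  have e : (ZMod p)ˣ ≃ MulAction.stabilizer (GL (Fin 2) (ZMod p))
      (Projectivization.mk L ![x, 1] (vne x)) :=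
    Equiv.ofBijective (fun u => ⟨scalarGL p u, (smul_eq_iff_scalar hx _).2 ⟨u, rfl⟩⟩)
      ⟨fun u v h => scalarGL_injective p (congrArg Subtype.val h),
       fun g => by
        obtain ⟨u, hu⟩ := (smul_eq_iff_scalar hx g.1).1 g.2
        exact ⟨u, Subtype.ext hu.symm⟩⟩
  rw [← Nat.card_congr e, Nat.card_eq_fintype_card, ZMod.card_units]

lemma orbit_card {x : L} (hx : x ^ p ^ 2 ≠ x) :
    Nat.card (MulAction.orbit (GL (Fin 2) (ZMod p)) (Projectivization.mk L ![x, 1] (vne x)))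
      = p * (p ^ 2 - 1) := by
  classical
  have hp : p.Prime := Fact.out
  set P := Projectivization.mk L ![x, 1] (vne x)
  have hfin : (MulAction.orbit (GL (Fin 2) (ZMod p)) P).Finite := Set.finite_range _
  letI := hfin.fintype
  letI : Fintype ↥(MulAction.stabilizer (GL (Fin 2) (ZMod p)) P) :=
    Fintype.ofFinite _
  have hos := MulAction.card_orbit_mul_card_stabilizer_eq_card_group (GL (Fin 2) (ZMod p)) P
  rw [← Nat.card_eq_fintype_card, ← Nat.card_eq_fintype_card, ← Nat.card_eq_fintype_card,
    stab_card hx] at hos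
  have hGL : Nat.card (GL (Fin 2) (ZMod p)) = (p ^ 2 - 1) * (p ^ 2 - p) := by
    rw [Matrix.card_GL_field]
    simp [Fin.prod_univ_two, ZMod.card]
  apply Nat.eq_of_mul_eq_mul_right (show 0 < p - 1 by have := hp.two_le; omega)
  rw [hos, hGL]
  have h1 : p ^ 2 - p = p * (p - 1) := by
    rw [Nat.mul_sub, pow_two, mul_one]
  rw [h1]
  have h2 : p * (p ^ 2 - 1) * (p - 1) = (p ^ 2 - 1) * (p * (p - 1)) := by ring
  rw [h2]

end Stab2




section Cond
variable {p : ℕ} [Fact p.Prime] {L : Type*} [Field L] [CharP L p]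

lemma cond_mk_iff (x : L) :
    (∃ (a b : L) (h : (![a, b] : Fin 2 → L) ≠ 0), a ^ p ^ 2 = a ∧ b ^ p ^ 2 = b ∧
        Projectivization.mk L ![x, 1] (vne x) = Projectivization.mk L ![a, b] h) ↔
      x ^ p ^ 2 = x := by
  constructor
  · rintro ⟨a, b, h, ha, hb, heq⟩
    rw [Projectivization.mk_eq_mk_iff] at heq
    obtain ⟨t, ht⟩ := heq
    have h0 := congrFun ht 0
    have h1 := congrFun ht 1
    simp only [Pi.smul_apply, Matrix.cons_val_zero, Matrix.cons_val_one, Matrix.head_cons,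
      Units.smul_def, smul_eq_mul] at h0 h1
    have hb0 : b ≠ 0 := by
      intro h'
      rw [h', mul_zero] at h1
      exact one_ne_zero h1.symm
    have hxab : x = a / b := by
      field_simp
      linear_combination a * h1 - b * h0
    rw [hxab, div_pow, ha, hb]
  · intro hxx
    exact ⟨x, 1, vne x, hxx, one_pow _, rfl⟩

lemma exists_rep (P : Projectivization L (Fin 2 → L))
    (hP : ¬ ∃ (a b : L) (h : (![a, b] : Fin 2 → L) ≠ 0), a ^ p ^ 2 = a ∧ b ^ p ^ 2 = b ∧
        P = Projectivization.mk L ![a, b] h) :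
    ∃ x : L, x ^ p ^ 2 ≠ x ∧ P = Projectivization.mk L ![x, 1] (vne x) := by
  have hp : p.Prime := Fact.out
  induction P using Projectivization.ind with
  | h v hv =>
    by_cases h1 : v 1 = 0
    · exfalso
      apply hP
      have h0 : v 0 ≠ 0 := by
        intro h0
        apply hv
        funext i
        fin_cases i
        · exact h0
        · exact h1
      have hne10 : (![(1 : L), 0] : Fin 2 → L) ≠ 0 := by
        intro h; simpa using congrFun h 0
      refine ⟨1, 0, hne10, one_pow _, zero_pow (pow_ne_zero 2 hp.ne_zero), ?_⟩
      rw [Projectivization.mk_eq_mk_iff]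
      refine ⟨Units.mk0 (v 0) h0, ?_⟩
      funext i
      fin_cases i <;> simp [Units.smul_def, h1]
    · refine ⟨v 0 / v 1, ?_, ?_⟩
      · intro hxx
        apply hP
        refine ⟨v 0 / v 1, 1, vne _, hxx, one_pow _, ?_⟩
        rw [Projectivization.mk_eq_mk_iff]
        refine ⟨Units.mk0 (v 1) h1, ?_⟩
        funext i
        fin_cases i <;> simp [Units.smul_def]
        · field_simp
      · rw [Projectivization.mk_eq_mk_iff]
        refine ⟨Units.mk0 (v 1) h1, ?_⟩
        funext i
        fin_cases i <;> simp [Units.smul_def]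
        · field_simp
end Cond



section Inv
variable {p : ℕ} [Fact p.Prime] {L : Type*} [Field L] [Algebra (ZMod p) L] [CharP L p]

lemma algMap_fix (z : ZMod p) : (algebraMap (ZMod p) L z) ^ p ^ 2 = algebraMap (ZMod p) L z := by
  rw [← map_pow, ZMod.pow_card_pow]

lemma cond_smul (P : Projectivization L (Fin 2 → L)) (g : GL (Fin 2) (ZMod p))
    (h : ∃ (a b : L) (h : (![a, b] : Fin 2 → L) ≠ 0), a ^ p ^ 2 = a ∧ b ^ p ^ 2 = b ∧
        P = Projectivization.mk L ![a, b] h) :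
    ∃ (a b : L) (h : (![a, b] : Fin 2 → L) ≠ 0), a ^ p ^ 2 = a ∧ b ^ p ^ 2 = b ∧
        g • P = Projectivization.mk L ![a, b] h := by
  obtain ⟨a, b, hab, ha, hb, rfl⟩ := h
  set M := ((g : Matrix (Fin 2) (Fin 2) (ZMod p)).map (algebraMap (ZMod p) L)) with hM
  have hmv : M.mulVec ![a, b] ≠ 0 := by
    exact fun hc => hab (((Matrix.GeneralLinearGroup.toLin
      (Matrix.GeneralLinearGroup.map (algebraMap (ZMod p) L) g)).toLinearEquiv.map_eq_zero_iff).1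
      (by simpa [hM] using hc))
  have hpair : M.mulVec ![a, b] = ![M 0 0 * a + M 0 1 * b, M 1 0 * a + M 1 1 * b] :=
    mulVec_pair M a b
  have hfix : ∀ (i j : Fin 2), (M i j) ^ p ^ 2 = M i j := by
    intro i j
    simp only [hM, Matrix.map_apply]
    exact algMap_fix _
  have key : ∀ (i j : Fin 2), (M i 0 * a + M i 1 * b) ^ p ^ 2 = M i 0 * a + M i 1 * b := by
    intro i _
    rw [add_pow_char_pow, mul_pow, mul_pow, hfix, hfix, ha, hb]
  refine ⟨M 0 0 * a + M 0 1 * b, M 1 0 * a + M 1 1 * b, hpair ▸ hmv, key 0 0, key 1 0, ?_⟩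
  rw [smulOf_mk]
  apply (Projectivization.mk_eq_mk_iff _ _ _ _ _).2
  exact ⟨1, by rw [one_smul, hpair]⟩
end Inv
section Count
open Polynomial

lemma card_K2 (p f : ℕ) [Fact p.Prime] (hf1 : Even f) (hf2 : 2 < f) :
    Nat.card {x : GaloisField p f // x ^ p ^ 2 = x} = p ^ 2 := by
  classical
  set L := GaloisField p f
  letI : Fintype L := Fintype.ofFinite L
  have hp : p.Prime := Fact.out
  have hcard : Fintype.card L = p ^ f := by
    rw [← Nat.card_eq_fintype_card, GaloisField.card p f (by omega)]
  obtain ⟨m, hm⟩ := hf1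
  have hq1 : 1 < p ^ f := Nat.one_lt_pow (by omega) hp.one_lt
  have hq2 : 1 < p ^ 2 := Nat.one_lt_pow (by omega) hp.one_lt
  have hdvd : p ^ 2 - 1 ∣ p ^ f - 1 := by
    have := Nat.sub_dvd_pow_sub_pow (p ^ 2) 1 m
    rwa [one_pow, ← pow_mul, show 2 * m = f by omega] at this
  set F : Polynomial L := X ^ (p ^ f) - X with hF
  set G : Polynomial L := X ^ (p ^ 2) - X with hG
  have hFne : F ≠ 0 := FiniteField.X_pow_card_sub_X_ne_zero L hq1
  have hGne : G ≠ 0 := FiniteField.X_pow_card_sub_X_ne_zero L hq2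
  have hrootsF : F.roots = Finset.univ.val := by
    have := FiniteField.roots_X_pow_card_sub_X L
    rwa [hcard] at this
  have hGdvd : G ∣ F := by
    have h1 : (X : Polynomial L) ^ (p ^ 2 - 1) - 1 ∣ X ^ (p ^ f - 1) - 1 := by
      obtain ⟨k, hk⟩ := hdvd
      have := sub_dvd_pow_sub_pow ((X : Polynomial L) ^ (p ^ 2 - 1)) 1 k
      rwa [← pow_mul, one_pow, ← hk] at this
    have h2 : G = X * (X ^ (p ^ 2 - 1) - 1) := by
      rw [mul_sub, mul_one, ← pow_succ', Nat.sub_add_cancel hq2.le]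
    have h3 : F = X * (X ^ (p ^ f - 1) - 1) := by
      rw [mul_sub, mul_one, ← pow_succ', Nat.sub_add_cancel hq1.le]
    rw [h2, h3]
    exact mul_dvd_mul_left _ h1
  obtain ⟨H, hH⟩ := hGdvd
  have hHne : H ≠ 0 := by
    rintro rfl
    rw [mul_zero] at hH
    exact hFne hH
  have hdegF : F.natDegree = p ^ f := FiniteField.X_pow_card_sub_X_natDegree_eq L hq1
  have hdegG : G.natDegree = p ^ 2 := FiniteField.X_pow_card_sub_X_natDegree_eq L hq2
  have hdegH : H.natDegree = p ^ f - p ^ 2 := by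
    have := Polynomial.natDegree_mul hGne hHne
    rw [← hH, hdegF, hdegG] at this
    omega
  have hrootsmul : F.roots = G.roots + H.roots := by
    rw [hH, Polynomial.roots_mul (hH ▸ hFne)]
  have hcardF : Multiset.card F.roots = p ^ f := by
    rw [hrootsF]
    exact hcard
  have hGle : Multiset.card G.roots ≤ p ^ 2 := (Polynomial.card_roots' G).trans_eq hdegG
  have hHle : Multiset.card H.roots ≤ p ^ f - p ^ 2 := (Polynomial.card_roots' H).trans_eq hdegH
  have hcardG : Multiset.card G.roots = p ^ 2 := by
    have := congrArg Multiset.card hrootsmul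
    rw [hcardF, Multiset.card_add] at this
    have hle : p ^ 2 ≤ p ^ f := Nat.pow_le_pow_right hp.pos (by omega)
    omega
  have hnodup : G.roots.Nodup :=
    Multiset.nodup_of_le (hrootsmul ▸ Multiset.le_add_right _ _) (hrootsF ▸ Finset.univ.nodup)
  have hmem : ∀ y : L, y ^ p ^ 2 = y ↔ y ∈ G.roots.toFinset := by
    intro y
    rw [Multiset.mem_toFinset, Polynomial.mem_roots hGne]
    simp only [hG, Polynomial.IsRoot, Polynomial.eval_sub, Polynomial.eval_pow,
      Polynomial.eval_X, sub_eq_zero]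
  rw [Nat.card_congr (Equiv.subtypeEquivRight hmem), Nat.card_eq_fintype_card,
    Fintype.card_coe, Multiset.toFinset_card_of_nodup hnodup, hcardG]

lemma card_notK2 (p f : ℕ) [Fact p.Prime] (hf1 : Even f) (hf2 : 2 < f) :
    Nat.card {x : GaloisField p f // ¬ x ^ p ^ 2 = x} = p ^ f - p ^ 2 := by
  classical
  set L := GaloisField p f
  letI : Fintype L := Fintype.ofFinite L
  have hcard : Fintype.card L = p ^ f := by
    rw [← Nat.card_eq_fintype_card, GaloisField.card p f (by omega)]
  have h1 : Nat.card {x : L // ¬ x ^ p ^ 2 = x} =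
      Fintype.card L - Nat.card {x : L // x ^ p ^ 2 = x} := by
    rw [Nat.card_eq_fintype_card, Nat.card_eq_fintype_card]
    convert Fintype.card_subtype_compl (fun x : L => x ^ p ^ 2 = x)
  rw [h1, hcard, card_K2 p f hf1 hf2]
end Count

/-- Let `q = p^f` with `f` even, `f > 2`.  Every `GL₂(𝔽_p)`-orbit on
`ℙ¹(𝔽_q) \ ℙ¹(𝔽_{p²})` has cardinality `p(p² − 1)`, and the number of such orbits is
`p(p^(f−2) − 1)/(p² − 1)` (stated multiplicatively to avoid division).  A point of
`ℙ¹(𝔽_q)` lies in `ℙ¹(𝔽_{p²})` iff it has homogeneous coordinates fixed by the square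
of Frobenius. -/
theorem orbit_count_complement_P1Fp2 (p f : ℕ) [Fact p.Prime] (hf1 : Even f) (hf2 : 2 < f) :
    (∀ P : Projectivization (GaloisField p f) (Fin 2 → GaloisField p f),
      (¬ ∃ (a b : GaloisField p f) (h : (![a, b] : Fin 2 → GaloisField p f) ≠ 0),
          a ^ p ^ 2 = a ∧ b ^ p ^ 2 = b ∧ P = Projectivization.mk (GaloisField p f) ![a, b] h) →
      Nat.card (MulAction.orbit (GL (Fin 2) (ZMod p)) P) = p * (p ^ 2 - 1)) ∧
    Nat.card {O : Set (Projectivization (GaloisField p f) (Fin 2 → GaloisField p f)) |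
        ∃ P : Projectivization (GaloisField p f) (Fin 2 → GaloisField p f),
          (¬ ∃ (a b : GaloisField p f) (h : (![a, b] : Fin 2 → GaloisField p f) ≠ 0),
              a ^ p ^ 2 = a ∧ b ^ p ^ 2 = b ∧
              P = Projectivization.mk (GaloisField p f) ![a, b] h) ∧
          O = MulAction.orbit (GL (Fin 2) (ZMod p)) P}
      * (p ^ 2 - 1) = p * (p ^ (f - 2) - 1) := by
  classical
  have hp : p.Prime := Fact.out
  set L := GaloisField p f with hL
  have part1 : ∀ P : Projectivization L (Fin 2 → L),
      (¬ ∃ (a b : L) (h : (![a, b] : Fin 2 → L) ≠ 0),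
          a ^ p ^ 2 = a ∧ b ^ p ^ 2 = b ∧ P = Projectivization.mk L ![a, b] h) →
      Nat.card (MulAction.orbit (GL (Fin 2) (ZMod p)) P) = p * (p ^ 2 - 1) := by
    intro P hP
    obtain ⟨x, hx, rfl⟩ := exists_rep P hP
    exact orbit_card hx
  refine ⟨part1, ?_⟩
  -- notation
  set Cond : Projectivization L (Fin 2 → L) → Prop := fun P =>
    ∃ (a b : L) (h : (![a, b] : Fin 2 → L) ≠ 0),
      a ^ p ^ 2 = a ∧ b ^ p ^ 2 = b ∧ P = Projectivization.mk L ![a, b] h with hCond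
  set 𝒪 : Set (Set (Projectivization L (Fin 2 → L))) :=
    {O | ∃ P, (¬ Cond P) ∧ O = MulAction.orbit (GL (Fin 2) (ZMod p)) P} with hO
  -- the complement has p^f - p^2 elements
  have hS : Nat.card {P : Projectivization L (Fin 2 → L) // ¬ Cond P} = p ^ f - p ^ 2 := by
    rw [← card_notK2 p f hf1 hf2]
    refine (Nat.card_congr (α := {x : L // ¬ x ^ p ^ 2 = x}) ?_).symm
    refine Equiv.ofBijective
      (fun x => ⟨Projectivization.mk L ![x.1, 1] (vne x.1),
        fun hc => x.2 ((cond_mk_iff x.1).1 hc)⟩) ⟨?_, ?_⟩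
    · intro x y hxy
      have := congrArg Subtype.val hxy
      rw [Projectivization.mk_eq_mk_iff] at this
      obtain ⟨t, ht⟩ := this
      have h0 := congrFun ht 0
      have h1 := congrFun ht 1
      simp only [Pi.smul_apply, Matrix.cons_val_zero, Matrix.cons_val_one, Matrix.head_cons,
        Units.smul_def, smul_eq_mul, mul_one] at h0 h1
      apply Subtype.ext
      rw [← h0, h1, one_mul]
    · rintro ⟨P, hP⟩
      obtain ⟨x, hx, hPx⟩ := exists_rep P hP
      exact ⟨⟨x, hx⟩, Subtype.ext hPx.symm⟩
  -- finiteness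
  haveI : Finite (Projectivization L (Fin 2 → L)) := Quotient.finite _
  letI : Fintype ↥𝒪 := Fintype.ofFinite _
  -- fiber map
  set Φ : {P : Projectivization L (Fin 2 → L) // ¬ Cond P} → ↥𝒪 := fun P =>
    ⟨MulAction.orbit (GL (Fin 2) (ZMod p)) P.1, ⟨P.1, P.2, rfl⟩⟩ with hΦ
  have hfiber : ∀ O : ↥𝒪, Nat.card {P // Φ P = O} = p * (p ^ 2 - 1) := by
    intro O
    obtain ⟨P₀, hP₀, hOP₀⟩ := O.2
    rw [← part1 P₀ hP₀]
    apply Nat.card_congr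
    refine Equiv.ofBijective (fun q => ⟨q.1.1, ?_⟩) ⟨?_, ?_⟩
    · have : MulAction.orbit (GL (Fin 2) (ZMod p)) q.1.1 = (O : Set _) :=
        congrArg Subtype.val q.2
      rw [hOP₀] at this
      exact MulAction.orbit_eq_iff.1 this
    · intro q r hqr
      apply Subtype.ext
      apply Subtype.ext
      simp only [Subtype.mk.injEq] at hqr
      exact hqr
    · rintro ⟨Q, hQ⟩
      have hnc : ¬ Cond Q := by
        intro hc
        obtain ⟨g, hg⟩ := hQ
        apply hP₀
        have := cond_smul _ g⁻¹ hc
        rwa [← hg, inv_smul_smul] at this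
      refine ⟨⟨⟨Q, hnc⟩, ?_⟩, rfl⟩
      apply Subtype.ext
      show MulAction.orbit (GL (Fin 2) (ZMod p)) Q = (O : Set _)
      rw [hOP₀]
      exact MulAction.orbit_eq_iff.2 hQ
  -- sum over fibers
  have htot : Nat.card {P : Projectivization L (Fin 2 → L) // ¬ Cond P} =
      Nat.card ↥𝒪 * (p * (p ^ 2 - 1)) := by
    letI : ∀ O : ↥𝒪, Fintype {P // Φ P = O} := fun O => Fintype.ofFinite _
    rw [Nat.card_congr (Equiv.sigmaFiberEquiv Φ).symm, Nat.card_eq_fintype_card,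
      Fintype.card_sigma]
    rw [Nat.card_eq_fintype_card]
    rw [Finset.sum_congr rfl (fun O _ => ?_), Finset.sum_const, Finset.card_univ, smul_eq_mul]
    rw [← Nat.card_eq_fintype_card, hfiber O]
  rw [hS] at htot
  -- arithmetic
  have hps : p ^ f - p ^ 2 = p ^ 2 * (p ^ (f - 2) - 1) := by
    rw [Nat.mul_sub, mul_one, ← pow_add]
    congr 2
    omega
  rw [hps] at htot
  apply Nat.eq_of_mul_eq_mul_right hp.pos
  calc Nat.card ↥𝒪 * (p ^ 2 - 1) * p = Nat.card ↥𝒪 * (p * (p ^ 2 - 1)) := by ring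
    _ = p ^ 2 * (p ^ (f - 2) - 1) := htot.symm
    _ = p * (p ^ (f - 2) - 1) * p := by ring
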